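/- Let $-1<\alpha<0$, $T>0$, and let $v\in \mathcal C^1([0,T])$. Then $\lim_{t\downarrow 0}\; \omega_{\alpha+2}(t)^{-1}\int_0^t v(s)\,\mathcal B_\alpha v(s)\,ds \;=\; v(0)^2$, where $\omega_{\alpha+2}(t)=t^{\alpha+1}/\Gamma(\alpha+2)$. -/

import Mathlib

open Real intervalIntegral Set Filter MeasureTheory Metric Topology

noncomputable def pint (k g : ℝ → ℝ) (x : ℝ) : ℝ := ∫ s in (0:ℝ)..1, k s * g (x * s)

lemma ker_int {α : ℝ} (hα₁ : -1 < α) :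
    IntervalIntegrable (fun s : ℝ => (1 - s) ^ α) volume 0 1 := by
  have h := (intervalIntegrable_rpow' (a := 0) (b := 1) hα₁).comp_sub_left 1
  simpa using h.symm

lemma ker_nonneg {α : ℝ} {s : ℝ} (hs : s ≤ 1) : 0 ≤ (1 - s) ^ α :=
  Real.rpow_nonneg (by linarith) α

-- maps-to fact
lemma maps_fact {T x s : ℝ} (hx : x ∈ Set.Icc 0 T) (hs : s ∈ Set.Icc (0:ℝ) 1) :
    x * s ∈ Set.Icc 0 T := by
  obtain ⟨hx0, hxT⟩ := hx; obtain ⟨hs0, hs1⟩ := hs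
  constructor
  · positivity
  · nlinarith

lemma pint_contOn {α T : ℝ} (hα₁ : -1 < α) (hT : 0 < T) {k g : ℝ → ℝ}
    (hk_cont : ContinuousOn k (Set.Ioo 0 1))
    (hk_bd : ∀ s ∈ Set.Ioc (0:ℝ) 1, |k s| ≤ (1 - s) ^ α)
    (hg : ContinuousOn g (Set.Icc 0 T)) :
    ContinuousOn (pint k g) (Set.Icc 0 T) := by
  obtain ⟨C, hC⟩ := isCompact_Icc.exists_bound_of_continuousOn hg
  intro x₀ hx₀
  apply intervalIntegral.continuousWithinAt_of_dominated_interval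
    (bound := fun s => (1 - s) ^ α * C)
  · filter_upwards [self_mem_nhdsWithin] with x hx
    rw [Set.uIoc_of_le (zero_le_one : (0:ℝ) ≤ 1),
      ← Measure.restrict_congr_set Ioo_ae_eq_Ioc]
    apply ContinuousOn.aestronglyMeasurable _ measurableSet_Ioo
    apply hk_cont.mul
    apply hg.comp (continuous_mul_left x).continuousOn
    intro s hs
    exact maps_fact hx (Set.Ioo_subset_Icc_self hs)
  · filter_upwards [self_mem_nhdsWithin] with x hx
    apply Filter.Eventually.of_forall
    intro s hs
    rw [Set.uIoc_of_le (zero_le_one : (0:ℝ) ≤ 1)] at hs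
    have h1 : |g (x * s)| ≤ C := by
      simpa [Real.norm_eq_abs] using hC (x * s) (maps_fact hx (Set.Ioc_subset_Icc_self hs))
    have h2 := hk_bd s hs
    have h3 : (0:ℝ) ≤ (1 - s) ^ α := ker_nonneg hs.2
    rw [Real.norm_eq_abs, abs_mul]
    exact mul_le_mul h2 h1 (abs_nonneg _) h3
  · exact (ker_int hα₁).mul_const C
  · apply Filter.Eventually.of_forall
    intro s hs
    rw [Set.uIoc_of_le (zero_le_one : (0:ℝ) ≤ 1)] at hs
    have hmt : Set.MapsTo (fun x : ℝ => x * s) (Set.Icc 0 T) (Set.Icc 0 T) :=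
      fun x hx => maps_fact hx (Set.Ioc_subset_Icc_self hs)
    have hcomp : ContinuousWithinAt (g ∘ fun x : ℝ => x * s) (Set.Icc 0 T) x₀ :=
      ContinuousWithinAt.comp (hg _ (hmt hx₀))
        ((continuous_mul_right s).continuousWithinAt) hmt
    exact continuousWithinAt_const.mul hcomp

lemma aux_meas {T : ℝ} {k g : ℝ → ℝ} (hk_cont : ContinuousOn k (Set.Ioo 0 1))
    (hg : ContinuousOn g (Set.Icc 0 T)) {x : ℝ} (hx : x ∈ Set.Icc 0 T) :
    AEStronglyMeasurable (fun s => k s * g (x * s)) (volume.restrict (Set.uIoc 0 1)) := by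
  rw [Set.uIoc_of_le (zero_le_one : (0:ℝ) ≤ 1),
    ← Measure.restrict_congr_set Ioo_ae_eq_Ioc]
  apply ContinuousOn.aestronglyMeasurable _ measurableSet_Ioo
  apply hk_cont.mul
  apply hg.comp (continuous_mul_left x).continuousOn
  intro s hs
  exact maps_fact hx (Set.Ioo_subset_Icc_self hs)

lemma ker_cont {α : ℝ} : ContinuousOn (fun s : ℝ => (1 - s) ^ α) (Set.Ioo 0 1) := by
  intro s hs
  apply ContinuousAt.continuousWithinAt
  exact ContinuousAt.rpow_const (by fun_prop) (Or.inl (by intro h; nlinarith [hs.2, sub_eq_zero.mp h]))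

lemma ker_cont' {α : ℝ} : ContinuousOn (fun s : ℝ => (1 - s) ^ α * s) (Set.Ioo 0 1) :=
  ker_cont.mul continuousOn_id

lemma psi_hasDeriv {α T : ℝ} (hα₁ : -1 < α) (hT : 0 < T) {v v' : ℝ → ℝ}
    (hv : ∀ s ∈ Set.Icc (0:ℝ) T, HasDerivAt v (v' s) s)
    (hv' : ContinuousOn v' (Set.Icc 0 T))
    {x₀ : ℝ} (hx₀ : x₀ ∈ Set.Ioo 0 T) :
    HasDerivAt (pint (fun s => (1 - s) ^ α) v)
      (pint (fun s => (1 - s) ^ α * s) v' x₀) x₀ := by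
  have hvc : ContinuousOn v (Set.Icc 0 T) := fun y hy =>
    (hv y hy).continuousAt.continuousWithinAt
  obtain ⟨M, hM⟩ := isCompact_Icc.exists_bound_of_continuousOn hv'
  have hM0 : 0 ≤ M := le_trans (norm_nonneg _) (hM 0 ⟨le_refl _, hT.le⟩)
  set ε := min x₀ (T - x₀) with hε
  have hεpos : 0 < ε := lt_min hx₀.1 (by linarith [hx₀.2])
  have hball : Metric.ball x₀ ε ⊆ Set.Ioo 0 T := by
    intro x hx
    rw [Metric.mem_ball, Real.dist_eq, abs_lt] at hx
    constructor
    · have := min_le_left x₀ (T - x₀); linarith [hx.1]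
    · have := min_le_right x₀ (T - x₀); linarith [hx.2]
  have key := intervalIntegral.hasDerivAt_integral_of_dominated_loc_of_deriv_le
    (F := fun x s => (1 - s) ^ α * v (x * s))
    (F' := fun x s => ((1 - s) ^ α * s) * v' (x * s))
    (a := 0) (b := 1) (μ := volume) (x₀ := x₀)
    (bound := fun s => (1 - s) ^ α * M) (Metric.ball_mem_nhds x₀ hεpos)
    ?_ ?_ ?_ ?_ ?_ ?_
  · have heq : pint (fun s => (1 - s) ^ α * s) v' x₀
        = ∫ s in (0:ℝ)..1, ((1 - s) ^ α * s) * v' (x₀ * s) := rfl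
    rw [pint, heq] at *
    exact key.2
  · filter_upwards [isOpen_Ioo.eventually_mem (hball (Metric.mem_ball_self hεpos))] with x hx
    exact aux_meas ker_cont hvc (Set.mem_Icc_of_Ioo hx)
  · apply (ker_int hα₁).mul_continuousOn
    rw [Set.uIcc_of_le (zero_le_one : (0:ℝ) ≤ 1)]
    apply hvc.comp (continuous_mul_left x₀).continuousOn
    intro s hs
    exact maps_fact (Set.mem_Icc_of_Ioo hx₀) hs
  · exact aux_meas ker_cont' hv' (Set.mem_Icc_of_Ioo hx₀)
  · apply Filter.Eventually.of_forall
    intro s hs x hx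
    rw [Set.uIoc_of_le (zero_le_one : (0:ℝ) ≤ 1)] at hs
    have h1 : |v' (x * s)| ≤ M := by
      simpa [Real.norm_eq_abs] using
        hM (x * s) (maps_fact (Set.mem_Icc_of_Ioo (hball hx)) (Set.Ioc_subset_Icc_self hs))
    have h3 : (0:ℝ) ≤ (1 - s) ^ α := ker_nonneg hs.2
    rw [Real.norm_eq_abs, abs_mul, abs_mul, abs_of_nonneg h3, abs_of_nonneg hs.1.le]
    have h4 : s * |v' (x * s)| ≤ M := by nlinarith [abs_nonneg (v' (x * s)), hs.1.le, hs.2]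
    calc (1 - s) ^ α * s * |v' (x * s)| = (1 - s) ^ α * (s * |v' (x * s)|) := by ring
      _ ≤ (1 - s) ^ α * M := mul_le_mul_of_nonneg_left h4 h3
  · exact (ker_int hα₁).mul_const M
  · apply Filter.Eventually.of_forall
    intro s hs x hx
    rw [Set.uIoc_of_le (zero_le_one : (0:ℝ) ≤ 1)] at hs
    have hxs : x * s ∈ Set.Icc 0 T :=
      maps_fact (Set.mem_Icc_of_Ioo (hball hx)) (Set.Ioc_subset_Icc_self hs)
    have hinner : HasDerivAt (fun y : ℝ => y * s) (1 * s) x := (hasDerivAt_id x).mul_const s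
    have hcomp : HasDerivAt (fun y : ℝ => v (y * s)) (v' (x * s) * (1 * s)) x :=
      HasDerivAt.comp x (hv _ hxs) hinner
    have := hcomp.const_mul ((1 - s) ^ α)
    exact this.congr_deriv (by ring)

lemma scale_int {f : ℝ → ℝ} {t : ℝ} (ht : 0 < t) :
    (∫ s in (0:ℝ)..t, f s) = t * ∫ u in (0:ℝ)..1, f (t * u) := by
  rw [intervalIntegral.integral_comp_mul_left f ht.ne']
  simp only [mul_zero, mul_one, smul_eq_mul]
  field_simp

lemma A_eq {α : ℝ} {v : ℝ → ℝ} {t : ℝ} (ht : 0 < t) :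
    (∫ r in (0:ℝ)..t, (t - r) ^ α * v r)
      = t ^ (α + 1) * pint (fun s => (1 - s) ^ α) v t := by
  rw [scale_int ht]
  have h : (∫ u in (0:ℝ)..1, (t - t * u) ^ α * v (t * u))
      = t ^ α * pint (fun s => (1 - s) ^ α) v t := by
    rw [pint, ← intervalIntegral.integral_const_mul]
    apply intervalIntegral.integral_congr_ae
    apply Filter.Eventually.of_forall
    intro u hu
    rw [Set.uIoc_of_le (zero_le_one : (0:ℝ) ≤ 1)] at hu
    have h1 : t - t * u = t * (1 - u) := by ring
    rw [h1, Real.mul_rpow ht.le (by linarith [hu.2])]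
    ring
  rw [h, Real.rpow_add_one ht.ne']
  ring

lemma B_deriv {α T : ℝ} (hα₁ : -1 < α) (hT : 0 < T) {v v' : ℝ → ℝ}
    (hv : ∀ s ∈ Set.Icc (0:ℝ) T, HasDerivAt v (v' s) s)
    (hv' : ContinuousOn v' (Set.Icc 0 T)) {s : ℝ} (hs : s ∈ Set.Ioo 0 T) :
    HasDerivAt (fun τ => ∫ r in (0:ℝ)..τ, (τ - r) ^ α * v r)
      ((α + 1) * s ^ α * pint (fun u => (1 - u) ^ α) v s
        + s ^ (α + 1) * pint (fun u => (1 - u) ^ α * u) v' s) s := by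
  have h1 : HasDerivAt (fun τ : ℝ => τ ^ (α + 1)) ((α + 1) * s ^ α) s := by
    have := Real.hasDerivAt_rpow_const (x := s) (p := α + 1) (Or.inl hs.1.ne')
    simpa [show α + 1 - 1 = α by ring] using this
  have h3 := h1.mul (psi_hasDeriv hα₁ hT hv hv' hs)
  apply h3.congr_of_eventuallyEq
  filter_upwards [isOpen_Ioo.mem_nhds hs] with τ hτ
  exact A_eq hτ.1

/-- For `-1 < α < 0`, `T > 0` and `v ∈ C¹([0,T])`,
`lim_{t↓0} ω_{α+2}(t)⁻¹ ∫₀ᵗ v 𝓑_α v = v(0)²`, where `ω_{α+2}(t) = t^(α+1)/Γ(α+2)`. -/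
theorem stmt_11 (α T : ℝ) (hα₁ : -1 < α) (hα₂ : α < 0) (hT : 0 < T)
    (v v' : ℝ → ℝ)
    (hv : ∀ s ∈ Set.Icc (0:ℝ) T, HasDerivAt v (v' s) s)
    (hv' : ContinuousOn v' (Set.Icc 0 T)) :
    Filter.Tendsto
      (fun t : ℝ => (t ^ (α + 1) / Real.Gamma (α + 2))⁻¹ *
        ∫ s in (0:ℝ)..t,
          v s * deriv (fun τ => ∫ r in (0:ℝ)..τ, ((τ - r) ^ α / Real.Gamma (α + 1)) * v r) s)
      (nhdsWithin 0 (Set.Ioi 0)) (nhds (v 0 ^ 2)) := by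
  have hα1p : (0:ℝ) < α + 1 := by linarith
  set Ψ : ℝ → ℝ := pint (fun u : ℝ => (1 - u) ^ α) v with hΨdef
  set Ψ₁ : ℝ → ℝ := pint (fun u : ℝ => (1 - u) ^ α * u) v' with hΨ₁def
  have hvc : ContinuousOn v (Set.Icc 0 T) := fun y hy =>
    (hv y hy).continuousAt.continuousWithinAt
  obtain ⟨Cv, hCv⟩ := isCompact_Icc.exists_bound_of_continuousOn hvc
  have hCv0 : 0 ≤ Cv := le_trans (norm_nonneg _) (hCv 0 ⟨le_refl _, hT.le⟩)
  have hΨc : ContinuousOn Ψ (Set.Icc 0 T) := by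
    apply pint_contOn hα₁ hT ker_cont _ hvc
    intro s hs
    rw [abs_of_nonneg (ker_nonneg hs.2)]
  have hΨ₁c : ContinuousOn Ψ₁ (Set.Icc 0 T) := by
    apply pint_contOn hα₁ hT ker_cont' _ hv'
    intro s hs
    have h0 := ker_nonneg (α := α) hs.2
    rw [abs_of_nonneg (by nlinarith [hs.1.le] : (0:ℝ) ≤ (1 - s) ^ α * s)]
    nlinarith [hs.2, hs.1.le]
  obtain ⟨CΨ, hCΨ⟩ := isCompact_Icc.exists_bound_of_continuousOn hΨc
  obtain ⟨CΨ₁, hCΨ₁⟩ := isCompact_Icc.exists_bound_of_continuousOn hΨ₁c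
  have hCΨ0 : 0 ≤ CΨ := le_trans (norm_nonneg _) (hCΨ 0 ⟨le_refl _, hT.le⟩)
  have hCΨ₁0 : 0 ≤ CΨ₁ := le_trans (norm_nonneg _) (hCΨ₁ 0 ⟨le_refl _, hT.le⟩)
  set G : ℝ → ℝ → ℝ := fun t u =>
    v (t * u) * ((α + 1) * u ^ α * Ψ (t * u) + t * u ^ (α + 1) * Ψ₁ (t * u)) with hGdef
  have hint_u : (∫ u in (0:ℝ)..1, u ^ α) = 1 / (α + 1) := by
    rw [integral_rpow (Or.inl hα₁), Real.one_rpow, Real.zero_rpow hα1p.ne']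
    ring
  have hΨ0 : Ψ 0 = v 0 / (α + 1) := by
    rw [hΨdef, pint]
    have h1 : (∫ s in (0:ℝ)..1, (1 - s) ^ α * v (0 * s))
        = ∫ s in (0:ℝ)..1, v 0 * (1 - s) ^ α := by
      apply intervalIntegral.integral_congr
      intro s _
      show (1 - s) ^ α * v (0 * s) = v 0 * (1 - s) ^ α
      rw [zero_mul]; ring
    rw [h1, intervalIntegral.integral_const_mul]
    have h2 : (∫ s in (0:ℝ)..1, (1 - s) ^ α) = ∫ x in (0:ℝ)..1, x ^ α := by
      have h3 := intervalIntegral.integral_comp_sub_left (a := 0) (b := 1)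
        (fun x : ℝ => x ^ α) 1
      simpa using h3
    rw [h2, hint_u]
    ring
  -- dominated convergence for the rescaled integrals
  have hlim : Tendsto (fun t => ∫ u in (0:ℝ)..1, G t u) (𝓝[>] (0:ℝ))
      (𝓝 (∫ u in (0:ℝ)..1, v 0 * ((α + 1) * u ^ α * Ψ 0))) := by
    apply intervalIntegral.tendsto_integral_filter_of_dominated_convergence
      (bound := fun u => Cv * ((α + 1) * CΨ + CΨ₁) * u ^ α)
    · filter_upwards [Ioo_mem_nhdsGT hT] with t ht
      rw [Set.uIoc_of_le (zero_le_one : (0:ℝ) ≤ 1),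
        ← Measure.restrict_congr_set Ioo_ae_eq_Ioc]
      apply ContinuousOn.aestronglyMeasurable _ measurableSet_Ioo
      have hmt : Set.MapsTo (fun u : ℝ => t * u) (Set.Ioo 0 1) (Set.Icc 0 T) := by
        intro u hu
        have : t * u = t * u := rfl
        exact maps_fact (x := t) ⟨ht.1.le, ht.2.le⟩ (Set.Ioo_subset_Icc_self hu)
      have hA : ContinuousOn (fun u : ℝ => v (t * u)) (Set.Ioo 0 1) :=
        hvc.comp (continuous_mul_left t).continuousOn hmt
      have hB : ContinuousOn (fun u : ℝ => Ψ (t * u)) (Set.Ioo 0 1) :=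
        hΨc.comp (continuous_mul_left t).continuousOn hmt
      have hB1 : ContinuousOn (fun u : ℝ => Ψ₁ (t * u)) (Set.Ioo 0 1) :=
        hΨ₁c.comp (continuous_mul_left t).continuousOn hmt
      have hUα : ContinuousOn (fun u : ℝ => u ^ α) (Set.Ioo 0 1) := fun u hu =>
        (Real.continuousAt_rpow_const u α (Or.inl hu.1.ne')).continuousWithinAt
      have hUα1 : ContinuousOn (fun u : ℝ => u ^ (α + 1)) (Set.Ioo 0 1) := fun u hu =>
        (Real.continuousAt_rpow_const u (α + 1) (Or.inl hu.1.ne')).continuousWithinAt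
      exact hA.mul (((continuousOn_const.mul hUα).mul hB).add
        ((continuousOn_const.mul hUα1).mul hB1))
    · filter_upwards [Ioo_mem_nhdsGT (lt_min hT one_pos)] with t ht
      apply Filter.Eventually.of_forall
      intro u hu
      rw [Set.uIoc_of_le (zero_le_one : (0:ℝ) ≤ 1)] at hu
      have htT : t < T := lt_of_lt_of_le ht.2 (min_le_left _ _)
      have ht1 : t ≤ 1 := le_of_lt (lt_of_lt_of_le ht.2 (min_le_right _ _))
      have htu : t * u ∈ Set.Icc 0 T :=
        maps_fact (x := t) ⟨ht.1.le, htT.le⟩ (Set.Ioc_subset_Icc_self hu)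
      have huα : (0:ℝ) ≤ u ^ α := Real.rpow_nonneg hu.1.le α
      have hua1 : u ^ (α + 1) = u ^ α * u := Real.rpow_add_one hu.1.ne' α
      have hvb : |v (t * u)| ≤ Cv := by
        simpa [Real.norm_eq_abs] using hCv _ htu
      have hX : |(α + 1) * u ^ α * Ψ (t * u)| ≤ (α + 1) * u ^ α * CΨ := by
        rw [abs_mul, abs_mul, abs_of_nonneg hα1p.le, abs_of_nonneg huα]
        have := hCΨ _ htu
        rw [Real.norm_eq_abs] at this
        exact mul_le_mul_of_nonneg_left this (by positivity)
      have hY : |t * u ^ (α + 1) * Ψ₁ (t * u)| ≤ u ^ α * CΨ₁ := by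
        rw [abs_mul, abs_mul, abs_of_nonneg ht.1.le,
          abs_of_nonneg (Real.rpow_nonneg hu.1.le _)]
        have h5 := hCΨ₁ _ htu
        rw [Real.norm_eq_abs] at h5
        have htu1 : t * u ≤ 1 := mul_le_one₀ ht1 hu.1.le hu.2
        have h6 : t * u ^ (α + 1) ≤ u ^ α := by
          rw [hua1]
          nlinarith [mul_nonneg huα (sub_nonneg.mpr htu1)]
        exact mul_le_mul h6 h5 (abs_nonneg _) huα
      calc ‖G t u‖
          = |v (t * u)| * |(α + 1) * u ^ α * Ψ (t * u)
              + t * u ^ (α + 1) * Ψ₁ (t * u)| := by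
            simp only [hGdef, Real.norm_eq_abs, abs_mul]
        _ ≤ Cv * (|(α + 1) * u ^ α * Ψ (t * u)| + |t * u ^ (α + 1) * Ψ₁ (t * u)|) :=
            mul_le_mul hvb (abs_add_le _ _) (abs_nonneg _) hCv0
        _ ≤ Cv * ((α + 1) * u ^ α * CΨ + u ^ α * CΨ₁) :=
            mul_le_mul_of_nonneg_left (add_le_add hX hY) hCv0
        _ = Cv * ((α + 1) * CΨ + CΨ₁) * u ^ α := by ring
    · exact (intervalIntegrable_rpow' hα₁).const_mul _
    · apply Filter.Eventually.of_forall
      intro u hu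
      rw [Set.uIoc_of_le (zero_le_one : (0:ℝ) ≤ 1)] at hu
      have h0T : (0:ℝ) ∈ Set.Icc 0 T := ⟨le_refl _, hT.le⟩
      have htu : Tendsto (fun t : ℝ => t * u) (𝓝[>] (0:ℝ)) (𝓝[Set.Icc 0 T] 0) := by
        rw [tendsto_nhdsWithin_iff]
        constructor
        · have h8 : Tendsto (fun t : ℝ => t * u) (𝓝 0) (𝓝 0) := by
            simpa using (continuous_mul_right u).tendsto 0
          exact h8.mono_left nhdsWithin_le_nhds
        · filter_upwards [Ioo_mem_nhdsGT hT] with t ht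
          exact maps_fact (x := t) ⟨ht.1.le, ht.2.le⟩ (Set.Ioc_subset_Icc_self hu)
      have hv0 : Tendsto (fun t : ℝ => v (t * u)) (𝓝[>] (0:ℝ)) (𝓝 (v 0)) :=
        (hvc 0 h0T).tendsto.comp htu
      have hΨt : Tendsto (fun t : ℝ => Ψ (t * u)) (𝓝[>] (0:ℝ)) (𝓝 (Ψ 0)) :=
        (hΨc 0 h0T).tendsto.comp htu
      have hΨ₁t : Tendsto (fun t : ℝ => Ψ₁ (t * u)) (𝓝[>] (0:ℝ)) (𝓝 (Ψ₁ 0)) :=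
        (hΨ₁c 0 h0T).tendsto.comp htu
      have htt : Tendsto (fun t : ℝ => t) (𝓝[>] (0:ℝ)) (𝓝 0) :=
        tendsto_id.mono_right nhdsWithin_le_nhds
      have hfin := hv0.mul (((tendsto_const_nhds (x := (α + 1) * u ^ α)).mul hΨt).add
        (((htt.mul_const (u ^ (α + 1))).mul hΨ₁t)))
      simpa using hfin
  -- value of the limit integral
  have hival : (∫ u in (0:ℝ)..1, v 0 * ((α + 1) * u ^ α * Ψ 0)) = v 0 ^ 2 / (α + 1) := by
    have h1 : (∫ u in (0:ℝ)..1, v 0 * ((α + 1) * u ^ α * Ψ 0))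
        = ∫ u in (0:ℝ)..1, (v 0 * (α + 1) * Ψ 0) * u ^ α := by
      apply intervalIntegral.integral_congr
      intro u _
      ring
    rw [h1, intervalIntegral.integral_const_mul, hint_u, hΨ0]
    field_simp
  have hΓ1 : 0 < Real.Gamma (α + 1) := Real.Gamma_pos_of_pos hα1p
  have hΓ2eq : Real.Gamma (α + 2) = (α + 1) * Real.Gamma (α + 1) := by
    rw [show α + 2 = (α + 1) + 1 by ring, Real.Gamma_add_one hα1p.ne']
  -- the function in the statement, rewritten
  have hfun : (fun τ => ∫ r in (0:ℝ)..τ, ((τ - r) ^ α / Real.Gamma (α + 1)) * v r)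
      = fun τ => (Real.Gamma (α + 1))⁻¹ * ∫ r in (0:ℝ)..τ, (τ - r) ^ α * v r := by
    funext τ
    rw [← intervalIntegral.integral_const_mul]
    apply intervalIntegral.integral_congr
    intro r _
    ring
  have hderiv : ∀ s ∈ Set.Ioo 0 T,
      deriv (fun τ => ∫ r in (0:ℝ)..τ, ((τ - r) ^ α / Real.Gamma (α + 1)) * v r) s
        = (Real.Gamma (α + 1))⁻¹ * ((α + 1) * s ^ α * Ψ s + s ^ (α + 1) * Ψ₁ s) := by
    intro s hs
    rw [hfun, deriv_const_mul_field, (B_deriv hα₁ hT hv hv' hs).deriv]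
  -- eventual equality of the statement function with (α+1) * ∫ G
  have heq : (fun t : ℝ => (α + 1) * ∫ u in (0:ℝ)..1, G t u)
      =ᶠ[𝓝[>] (0:ℝ)]
      (fun t : ℝ => (t ^ (α + 1) / Real.Gamma (α + 2))⁻¹ *
        ∫ s in (0:ℝ)..t,
          v s * deriv (fun τ => ∫ r in (0:ℝ)..τ, ((τ - r) ^ α / Real.Gamma (α + 1)) * v r) s) := by
    filter_upwards [Ioo_mem_nhdsGT hT] with t ht
    have hstep : (∫ s in (0:ℝ)..t,
        v s * deriv (fun τ => ∫ r in (0:ℝ)..τ, ((τ - r) ^ α / Real.Gamma (α + 1)) * v r) s)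
        = (Real.Gamma (α + 1))⁻¹ * ∫ s in (0:ℝ)..t,
            v s * ((α + 1) * s ^ α * Ψ s + s ^ (α + 1) * Ψ₁ s) := by
      rw [← intervalIntegral.integral_const_mul]
      apply intervalIntegral.integral_congr_ae
      apply Filter.Eventually.of_forall
      intro s hs
      rw [Set.uIoc_of_le ht.1.le] at hs
      rw [hderiv s ⟨hs.1, lt_of_le_of_lt hs.2 ht.2⟩]
      ring
    have hsub : (∫ s in (0:ℝ)..t, v s * ((α + 1) * s ^ α * Ψ s + s ^ (α + 1) * Ψ₁ s))
        = t * (t ^ α * ∫ u in (0:ℝ)..1, G t u) := by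
      rw [scale_int (f := fun s => v s * ((α + 1) * s ^ α * Ψ s + s ^ (α + 1) * Ψ₁ s)) ht.1]
      rw [← intervalIntegral.integral_const_mul, ← mul_assoc,
        ← intervalIntegral.integral_const_mul]
      apply intervalIntegral.integral_congr_ae
      apply Filter.Eventually.of_forall
      intro u hu
      rw [Set.uIoc_of_le (zero_le_one : (0:ℝ) ≤ 1)] at hu
      simp only [hGdef]
      rw [Real.mul_rpow ht.1.le hu.1.le, Real.mul_rpow ht.1.le hu.1.le,
        Real.rpow_add_one ht.1.ne' α]
      ring
    rw [hstep, hsub, hΓ2eq, Real.rpow_add_one ht.1.ne' α]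
    have htα : t ^ α ≠ 0 := (Real.rpow_pos_of_pos ht.1 α).ne'
    have htne : t ≠ 0 := ht.1.ne'
    have hΓne : Real.Gamma (α + 1) ≠ 0 := hΓ1.ne'
    have hα1ne : α + 1 ≠ 0 := hα1p.ne'
    field_simp
  have hval : (α + 1) * (v 0 ^ 2 / (α + 1)) = v 0 ^ 2 := by field_simp
  have hmain : Tendsto (fun t : ℝ => (α + 1) * ∫ u in (0:ℝ)..1, G t u)
      (𝓝[>] (0:ℝ)) (𝓝 (v 0 ^ 2)) := by
    have h9 := hlim.const_mul (α + 1)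
    rw [hival, hval] at h9
    exact h9
  exact hmain.congr' heq
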